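/- arXiv:1307.7749 — 2 statements merged into one kernel-verified Lean document; each statement's English description precedes it below -/
import Mathlib

section
/- Let H be the join of an empty graph on s vertices with a graph G on t vertices, where t > s. If the minimum degree of G satisfies δ(G) > t − s, then μ(H) > t − s, and hence Q_μ = Q(G) + sI − (s/(t−μ))J is a Z-matrix with all off-diagonal entries strictly negative; consequently every eigenvector of Q(H) for μ(H) is strictly positive on the G-side and strictly negative on the independent set S (or vice versa), i.e., H is S-Roth. -/
open Matrix SimpleGraph Finset
open scoped Classical

/-- The signless Laplacian matrix `Q(G) = D(G) + A(G)` of a simple graph. -/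
noncomputable def signlessLap {V : Type*} [Fintype V] (G : SimpleGraph V) :
    Matrix V V ℝ :=
  fun i j => (if i = j then (G.degree i : ℝ) else 0) + (if G.Adj i j then 1 else 0)

/-- The join `H = \overline{K}_s ∨ G` of the empty graph on `s` vertices (the `inl`
side, the independent set `S`) with a graph `G` on `t` vertices (the `inr` side). -/
def joinEmpty (s : ℕ) {t : ℕ} (G : SimpleGraph (Fin t)) :
    SimpleGraph (Fin s ⊕ Fin t) where
  Adj u v :=
    match u, v with
    | .inl _, .inl _ => False
    | .inl _, .inr _ => True
    | .inr _, .inl _ => True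
    | .inr a, .inr b => G.Adj a b
  symm := ⟨by rintro (a | a) (b | b) h <;> simp_all; exact h.symm⟩
  loopless := ⟨by rintro (a | a) h <;> simp_all⟩

/-- `H = \overline{K}_s ∨ G` is `S`-Roth: every eigenvector of the smallest signless
Laplacian eigenvalue `μ` of `H` is strictly positive on `S` and strictly negative on
`V(G)`, or vice versa. -/
def IsSRoth {s t : ℕ} (G : SimpleGraph (Fin t)) (μ : ℝ) : Prop :=
  ∀ x : Fin s ⊕ Fin t → ℝ, x ≠ 0 → signlessLap (joinEmpty s G) *ᵥ x = μ • x →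
    ((∀ i, 0 < x (Sum.inl i)) ∧ (∀ j, x (Sum.inr j) < 0)) ∨
    ((∀ i, x (Sum.inl i) < 0) ∧ (∀ j, 0 < x (Sum.inr j)))

lemma signlessLap_isHermitian {V : Type*} [Fintype V] (G : SimpleGraph V) :
    (signlessLap G).IsHermitian := by
  ext u v
  simp only [conjTranspose_apply, signlessLap, star_trivial]
  by_cases h : u = v
  · subst h; rfl
  · have h' : v ≠ u := Ne.symm h
    have hadj : G.Adj v u ↔ G.Adj u v := ⟨fun a => a.symm, fun a => a.symm⟩
    simp [h, h', hadj]

lemma dot_self_eq {s t : ℕ} (x : Fin s ⊕ Fin t → ℝ) :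
    x ⬝ᵥ x = (∑ i, x (Sum.inl i)^2) + ∑ j, x (Sum.inr j)^2 := by
  rw [dotProduct, Fintype.sum_sum_type]
  congr 1
  · exact Finset.sum_congr rfl fun i _ => by ring
  · exact Finset.sum_congr rfl fun j _ => by ring


lemma psd_shift {n : Type*} [Fintype n] [DecidableEq n] {M : Matrix n n ℝ}
    (hM : M.IsHermitian) {μ : ℝ} (h : ∀ x : n → ℝ, μ * (x ⬝ᵥ x) ≤ x ⬝ᵥ (M *ᵥ x)) :
    (M - μ • 1).PosSemidef := by
  refine PosSemidef.of_dotProduct_mulVec_nonneg ?_ ?_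
  · exact by have h1 : Mᵀ = M := hM.eq; simp [Matrix.IsHermitian, Matrix.conjTranspose_sub, Matrix.conjTranspose_smul, h1]
  · intro x
    have := h x
    simp only [star_trivial, sub_mulVec, smul_mulVec, one_mulVec, dotProduct_sub,
      dotProduct_smul, smul_eq_mul, RCLike.re_to_real]
    linarith

lemma ray_lb {n : Type*} [Fintype n] [DecidableEq n] {M : Matrix n n ℝ}
    (hM : M.IsHermitian) {μ : ℝ}
    (h : ∀ (ν : ℝ) (x : n → ℝ), x ≠ 0 → M *ᵥ x = ν • x → μ ≤ ν) (x : n → ℝ) :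
    μ * (x ⬝ᵥ x) ≤ x ⬝ᵥ (M *ᵥ x) := by
  have hB : (M - μ • 1).IsHermitian := by have h1 : Mᵀ = M := hM.eq; simp [Matrix.IsHermitian, Matrix.conjTranspose_sub, Matrix.conjTranspose_smul, h1]
  have hpsd : (M - μ • 1).PosSemidef := by
    apply hB.posSemidef_iff_eigenvalues_nonneg.mpr
    intro i
    have hv := hB.mulVec_eigenvectorBasis i
    have hvne : (⇑(hB.eigenvectorBasis i) : n → ℝ) ≠ 0 := by
      have := hB.eigenvectorBasis.orthonormal.ne_zero i
      intro hc
      apply this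
      ext j; exact congrFun hc j
    have hMv : M *ᵥ ⇑(hB.eigenvectorBasis i) = (hB.eigenvalues i + μ) • ⇑(hB.eigenvectorBasis i) := by
      have : M *ᵥ ⇑(hB.eigenvectorBasis i) = (M - μ • 1) *ᵥ ⇑(hB.eigenvectorBasis i) + μ • ⇑(hB.eigenvectorBasis i) := by
        simp [sub_mulVec, smul_mulVec, one_mulVec]
      rw [this, hv, add_smul]
    have := h _ _ hvne hMv
    simp only [Pi.zero_apply]; linarith
  have := hpsd.dotProduct_mulVec_nonneg x
  simp only [star_trivial, sub_mulVec, smul_mulVec, one_mulVec, dotProduct_sub,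
    dotProduct_smul, smul_eq_mul, RCLike.re_to_real] at this
  linarith

lemma sign_of_min {n : Type*} [Fintype n] [DecidableEq n] {M : Matrix n n ℝ}
    (hM : M.IsHermitian) (hoff : ∀ i j : n, i ≠ j → M i j < 0) {μ : ℝ}
    (hray : ∀ w : n → ℝ, μ * (w ⬝ᵥ w) ≤ w ⬝ᵥ (M *ᵥ w))
    {z : n → ℝ} (hz : z ≠ 0) (hMz : M *ᵥ z = μ • z) :
    (∀ j, 0 < z j) ∨ (∀ j, z j < 0) := by
  -- kernel lemma: nonnegative eigenvector with a zero entry is zero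
  have hkernel : ∀ u : n → ℝ, (∀ k, 0 ≤ u k) → M *ᵥ u = μ • u → ∀ j, u j = 0 → u = 0 := by
    intro u hu hMu j hj
    have hrow : ∑ k, M j k * u k = 0 := by
      have := congrFun hMu j
      simp only [mulVec, dotProduct, Pi.smul_apply, smul_eq_mul] at this
      rw [this, hj, mul_zero]
    have hsplit : ∑ k ∈ univ.erase j, M j k * u k = 0 := by
      have : ∑ k, M j k * u k = M j j * u j + ∑ k ∈ univ.erase j, M j k * u k := by
        rw [← Finset.sum_erase_add univ _ (mem_univ j)]; ring
      rw [this, hj, mul_zero, zero_add] at hrow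
      exact hrow
    have hzero : ∀ k ∈ univ.erase j, M j k * u k = 0 := by
      intro k hk
      have hknej : k ≠ j := (Finset.mem_erase.mp hk).1
      have : ∀ k ∈ univ.erase j, M j k * u k ≤ 0 := fun k hk =>
        mul_nonpos_of_nonpos_of_nonneg (le_of_lt (hoff j k (Ne.symm (Finset.mem_erase.mp hk).1))) (hu k)
      have := (Finset.sum_eq_zero_iff_of_nonpos this).mp hsplit
      exact this k hk
    funext k
    by_cases hkj : k = j
    · rw [hkj]; exact hj
    · have := hzero k (Finset.mem_erase.mpr ⟨hkj, mem_univ k⟩)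
      have hMjk := hoff j k (Ne.symm hkj)
      have := (mul_eq_zero.mp this).resolve_left (ne_of_lt hMjk)
      exact this
  -- w = |z| is also an eigenvector
  set w : n → ℝ := fun j => |z j| with hw
  have hwnn : ∀ k, 0 ≤ w k := fun k => abs_nonneg _
  have hB : (M - μ • 1).PosSemidef := psd_shift hM hray
  have hBz : (M - μ • 1) *ᵥ z = 0 := by
    simp [sub_mulVec, smul_mulVec, one_mulVec, hMz]
  have hqz : z ⬝ᵥ ((M - μ • 1) *ᵥ z) = 0 := by rw [hBz]; simp
  have hcomp : w ⬝ᵥ ((M - μ • 1) *ᵥ w) ≤ z ⬝ᵥ ((M - μ • 1) *ᵥ z) := by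
    have expand : ∀ v : n → ℝ, v ⬝ᵥ ((M - μ • 1) *ᵥ v) =
        ∑ i, ∑ j, (M - μ • 1) i j * v i * v j := by
      intro v
      simp only [dotProduct, mulVec, Finset.mul_sum]
      exact Finset.sum_congr rfl fun i _ => Finset.sum_congr rfl fun j _ => by ring
    rw [expand, expand]
    apply Finset.sum_le_sum
    intro i _
    apply Finset.sum_le_sum
    intro j _
    by_cases hij : i = j
    · subst hij
      have h0 : w i * w i = z i * z i := abs_mul_abs_self _
      rw [mul_assoc, mul_assoc, h0]
    · have h1 : (M - μ • 1) i j = M i j := by simp [Matrix.one_apply, hij]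
      rw [h1]
      have h2 : z i * z j ≤ w i * w j := by
        rw [hw]; calc z i * z j ≤ |z i * z j| := le_abs_self _
          _ = |z i| * |z j| := abs_mul _ _
      have h3 : M i j * w i * w j ≤ M i j * z i * z j := by
        have := mul_le_mul_of_nonpos_left h2 (le_of_lt (hoff i j hij))
        linarith [this]
      exact h3
  have hq0 : w ⬝ᵥ ((M - μ • 1) *ᵥ w) = 0 := by
    have h1 := hB.dotProduct_mulVec_nonneg w
    simp only [star_trivial, RCLike.re_to_real] at h1
    rw [hqz] at hcomp
    linarith
  have hBw : (M - μ • 1) *ᵥ w = 0 := by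
    have := (hB.dotProduct_mulVec_zero_iff w).mp (by simpa using hq0)
    exact this
  have hMw : M *ᵥ w = μ • w := by
    have := congrArg (· + μ • w) hBw
    simp only [sub_mulVec, smul_mulVec, one_mulVec, sub_add_cancel, zero_add] at this
    exact this
  -- find a nonzero entry
  obtain ⟨j0, hj0⟩ : ∃ j0, z j0 ≠ 0 := by
    by_contra hc
    push_neg at hc
    exact hz (funext hc)
  rcases lt_or_gt_of_ne hj0 with hneg | hpos
  · -- z j0 < 0 : use v = w + z
    right
    have hv : M *ᵥ (w + z) = μ • (w + z) := by
      rw [mulVec_add, hMw, hMz, smul_add]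
    have hvnn : ∀ k, 0 ≤ (w + z) k := fun k => by
      simp only [Pi.add_apply, hw]; linarith [neg_abs_le (z k)]
    have hvj0 : (w + z) j0 = 0 := by
      simp only [Pi.add_apply, hw, abs_of_neg hneg]; ring
    have := hkernel _ hvnn hv j0 hvj0
    intro j
    have hj := congrFun this j
    simp only [Pi.add_apply, Pi.zero_apply, hw] at hj
    have : z j = -|z j| := by linarith
    rcases lt_trichotomy (z j) 0 with h | h | h
    · exact h
    · exfalso
      have hwz := hkernel w hwnn hMw j (by simp [hw, h])
      apply hz
      funext k
      have := congrFun hwz k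
      simp only [hw, Pi.zero_apply, abs_eq_zero] at this
      exact this
    · exfalso; rw [abs_of_pos h] at this; linarith
  · -- z j0 > 0 : use u = w - z
    left
    have hu : M *ᵥ (w - z) = μ • (w - z) := by
      rw [mulVec_sub, hMw, hMz, smul_sub]
    have hunn : ∀ k, 0 ≤ (w - z) k := fun k => by
      simp only [Pi.sub_apply, hw]; linarith [le_abs_self (z k)]
    have huj0 : (w - z) j0 = 0 := by
      simp only [Pi.sub_apply, hw, abs_of_pos hpos]; ring
    have := hkernel _ hunn hu j0 huj0
    intro j
    have hj := congrFun this j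
    simp only [Pi.sub_apply, Pi.zero_apply, hw] at hj
    have hzj : z j = |z j| := by linarith
    rcases lt_trichotomy (z j) 0 with h | h | h
    · exfalso; rw [abs_of_neg h] at hzj; linarith
    · exfalso
      have hwz := hkernel w hwnn hMw j (by simp [hw, h])
      apply hz
      funext k
      have := congrFun hwz k
      simp only [hw, Pi.zero_apply, abs_eq_zero] at this
      exact this
    · exact h

section helpers
variable {s t : ℕ} (G : SimpleGraph (Fin t))

lemma joinEmpty_adj_ll (i i' : Fin s) : ¬ (joinEmpty s G).Adj (Sum.inl i) (Sum.inl i') := by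
  simp [joinEmpty]

lemma joinEmpty_adj_lr (i : Fin s) (j : Fin t) : (joinEmpty s G).Adj (Sum.inl i) (Sum.inr j) := by
  simp [joinEmpty]

lemma joinEmpty_adj_rl (j : Fin t) (i : Fin s) : (joinEmpty s G).Adj (Sum.inr j) (Sum.inl i) := by
  simp [joinEmpty]

lemma joinEmpty_adj_rr (j k : Fin t) : (joinEmpty s G).Adj (Sum.inr j) (Sum.inr k) ↔ G.Adj j k := by
  simp [joinEmpty]

lemma degree_inl (i : Fin s) : (joinEmpty s G).degree (Sum.inl i) = t := by
  rw [degree, neighborFinset_eq_filter]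
  have : (univ.filter ((joinEmpty s G).Adj (Sum.inl i))) = univ.map ⟨Sum.inr, Sum.inr_injective⟩ := by
    ext u
    cases u with
    | inl a => simp [joinEmpty_adj_ll]
    | inr a => simp [joinEmpty_adj_lr]
  rw [this, Finset.card_map, card_univ, Fintype.card_fin]

lemma degree_inr (j : Fin t) : (joinEmpty s G).degree (Sum.inr j) = s + G.degree j := by
  rw [degree, neighborFinset_eq_filter]
  have : (univ.filter ((joinEmpty s G).Adj (Sum.inr j))) =
      (univ.map ⟨Sum.inl, Sum.inl_injective⟩) ∪ (G.neighborFinset j).map ⟨Sum.inr, Sum.inr_injective⟩ := by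
    ext u
    cases u with
    | inl a => simp [joinEmpty_adj_rl]
    | inr a => simp [joinEmpty_adj_rr]
  rw [this, Finset.card_union_of_disjoint, Finset.card_map, Finset.card_map, card_univ,
    Fintype.card_fin, degree]
  · simp [Finset.disjoint_left]

lemma degree_sum (j : Fin t) : ((G.degree j : ℝ)) = ∑ k, (if G.Adj j k then (1:ℝ) else 0) := by
  rw [degree, neighborFinset_eq_filter]
  rw [Finset.sum_boole]


lemma row_inl (x : Fin s ⊕ Fin t → ℝ) (i : Fin s) :
    (signlessLap (joinEmpty s G) *ᵥ x) (Sum.inl i)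
      = (t : ℝ) * x (Sum.inl i) + ∑ j, x (Sum.inr j) := by
  rw [mulVec, dotProduct, Fintype.sum_sum_type]
  have h1 : ∀ i' : Fin s, signlessLap (joinEmpty s G) (Sum.inl i) (Sum.inl i')
      = if i = i' then (t : ℝ) else 0 := by
    intro i'
    simp only [signlessLap, joinEmpty_adj_ll, if_false, add_zero, Sum.inl.injEq]
    by_cases h : i = i' <;> simp [h, degree_inl]
  have h2 : ∀ j : Fin t, signlessLap (joinEmpty s G) (Sum.inl i) (Sum.inr j) = 1 := by
    intro j
    simp [signlessLap, joinEmpty_adj_lr]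
  simp only [h1, h2, ite_mul, zero_mul, one_mul]
  rw [Finset.sum_ite_eq (univ : Finset (Fin s)) i (fun i' => (t:ℝ) * x (Sum.inl i'))]
  simp

lemma row_inr (x : Fin s ⊕ Fin t → ℝ) (j : Fin t) :
    (signlessLap (joinEmpty s G) *ᵥ x) (Sum.inr j)
      = (∑ i, x (Sum.inl i)) + ((s : ℝ) + G.degree j) * x (Sum.inr j)
        + ∑ k, (if G.Adj j k then (1:ℝ) else 0) * x (Sum.inr k) := by
  rw [mulVec, dotProduct, Fintype.sum_sum_type]
  have h1 : ∀ i : Fin s, signlessLap (joinEmpty s G) (Sum.inr j) (Sum.inl i) = 1 := by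
    intro i
    simp [signlessLap, joinEmpty_adj_rl]
  have h2 : ∀ k : Fin t, signlessLap (joinEmpty s G) (Sum.inr j) (Sum.inr k)
      = (if j = k then ((s : ℝ) + G.degree j) else 0) + (if G.Adj j k then 1 else 0) := by
    intro k
    simp only [signlessLap, joinEmpty_adj_rr, Sum.inr.injEq]
    by_cases h : j = k <;> simp [h, degree_inr]
  simp only [h1, h2, one_mul]
  have h3 : ∀ k : Fin t, ((if j = k then ((s : ℝ) + G.degree j) else 0)
        + (if G.Adj j k then (1:ℝ) else 0)) * x (Sum.inr k)
      = (if j = k then ((s : ℝ) + G.degree j) * x (Sum.inr k) else 0)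
        + (if G.Adj j k then (1:ℝ) else 0) * x (Sum.inr k) := by
    intro k
    by_cases h : j = k <;> by_cases h' : G.Adj j k <;> simp [h, h'] <;> ring
  simp only [h3]
  rw [Finset.sum_add_distrib,
    Finset.sum_ite_eq (univ : Finset (Fin t)) j (fun k => ((s:ℝ) + G.degree j) * x (Sum.inr k))]
  simp [add_assoc]

/-- The quadratic form of the signless Laplacian of the join, in terms of block data. -/
lemma quad_identity (x : Fin s ⊕ Fin t → ℝ) :
    x ⬝ᵥ (signlessLap (joinEmpty s G) *ᵥ x)
      = (t : ℝ) * (∑ i, x (Sum.inl i) ^ 2) + (s : ℝ) * (∑ j, x (Sum.inr j) ^ 2)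
        + 2 * (∑ i, x (Sum.inl i)) * (∑ j, x (Sum.inr j))
        + (∑ j, (G.degree j : ℝ) * x (Sum.inr j) ^ 2)
        + ∑ j, ∑ k, (if G.Adj j k then (1:ℝ) else 0) * x (Sum.inr j) * x (Sum.inr k) := by
  rw [dotProduct, Fintype.sum_sum_type]
  simp only [row_inl, row_inr]
  set y : Fin s → ℝ := fun i => x (Sum.inl i)
  set z : Fin t → ℝ := fun j => x (Sum.inr j)
  have e1 : ∑ i, y i * ((t:ℝ) * y i + ∑ j, z j)
      = (t:ℝ) * (∑ i, y i ^ 2) + (∑ i, y i) * (∑ j, z j) := by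
    have h : ∀ i, y i * ((t:ℝ) * y i + ∑ j, z j) = (t:ℝ) * y i ^ 2 + (∑ j, z j) * y i := by
      intro i; ring
    simp only [h]
    rw [Finset.sum_add_distrib, ← Finset.mul_sum, ← Finset.mul_sum]
    ring
  have e2 : ∑ j, z j * ((∑ i, y i) + ((s:ℝ) + G.degree j) * z j
        + ∑ k, (if G.Adj j k then (1:ℝ) else 0) * z k)
      = (∑ i, y i) * (∑ j, z j) + (s:ℝ) * (∑ j, z j ^ 2)
        + (∑ j, (G.degree j : ℝ) * z j ^ 2)
        + ∑ j, ∑ k, (if G.Adj j k then (1:ℝ) else 0) * z j * z k := by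
    have h : ∀ j, z j * ((∑ i, y i) + ((s:ℝ) + G.degree j) * z j
          + ∑ k, (if G.Adj j k then (1:ℝ) else 0) * z k)
        = (∑ i, y i) * z j + ((s:ℝ) * z j ^ 2 + (G.degree j : ℝ) * z j ^ 2)
          + ∑ k, (if G.Adj j k then (1:ℝ) else 0) * z j * z k := by
      intro j
      have h4 : ∑ k, z j * ((if G.Adj j k then (1:ℝ) else 0) * z k)
          = ∑ k, (if G.Adj j k then (1:ℝ) else 0) * z j * z k :=
        Finset.sum_congr rfl fun k _ => by ring
      rw [mul_add, mul_add, Finset.mul_sum, Finset.mul_sum, h4, ← Finset.mul_sum]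
      ring
    simp only [h]
    have hs : ∑ j, ((s:ℝ) * z j ^ 2 + (G.degree j : ℝ) * z j ^ 2)
        = (s:ℝ) * (∑ j, z j ^ 2) + ∑ j, (G.degree j:ℝ) * z j ^ 2 := by
      rw [Finset.sum_add_distrib, Finset.mul_sum]
    rw [Finset.sum_add_distrib, Finset.sum_add_distrib, hs, ← Finset.mul_sum]
    ring
  rw [e1, e2]
  ring

/-- Key inequality coming from nonnegativity of the complement's quadratic form. -/
lemma key_ineq (z : Fin t → ℝ) :
    (∑ j, z j)^2 + (∑ j, (G.degree j : ℝ) * z j ^ 2) - (t:ℝ) * (∑ j, z j ^ 2)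
      ≤ ∑ j, ∑ k, (if G.Adj j k then (1:ℝ) else 0) * z j * z k := by
  set a : Fin t → Fin t → ℝ := fun j k => if G.Adj j k then (1:ℝ) else 0 with ha
  set Z : ℝ := ∑ j, z j with hZ
  set S2 : ℝ := ∑ j, z j ^ 2 with hS2
  set D2 : ℝ := ∑ j, (G.degree j : ℝ) * z j ^ 2 with hD2
  set q : ℝ := ∑ j, ∑ k, a j k * z j * z k with hq
  have hsymm : ∀ j k, a j k = a k j := by
    intro j k; simp only [ha]; by_cases h : G.Adj j k
    · simp [h, h.symm]
    · have h' : ¬ G.Adj k j := fun hc => h hc.symm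
      simp [h, h']
  have hrowsum : ∀ j, ∑ k, a j k = (G.degree j : ℝ) := fun j => (degree_sum G j).symm
  have hcolsum : ∀ k, ∑ j, a j k = (G.degree k : ℝ) := by
    intro k
    rw [Finset.sum_congr rfl fun j _ => hsymm j k]
    exact hrowsum k
  -- the three component double sums
  have hP : ∑ j, ∑ k, (z j - z k)^2 = 2*(t:ℝ)*S2 - 2*Z^2 := by
    have hPj : ∀ j, ∑ k, (z j - z k)^2 = (t:ℝ)*z j^2 - (2*Z)*z j + S2 := by
      intro j
      have h : ∀ k, (z j - z k)^2 = (z j^2 - (2*z j)*z k) + z k^2 := fun k => by ring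
      simp only [h]
      rw [Finset.sum_add_distrib, Finset.sum_sub_distrib, Finset.sum_const, ← Finset.mul_sum,
        card_univ, Fintype.card_fin, nsmul_eq_mul]
      rw [← hZ, ← hS2]
      ring
    simp only [hPj]
    rw [Finset.sum_add_distrib, Finset.sum_sub_distrib, ← Finset.mul_sum, ← Finset.mul_sum,
      Finset.sum_const, card_univ, Fintype.card_fin, nsmul_eq_mul, ← hZ, ← hS2]
    ring
  have hR : ∑ j, ∑ k, (if j = k then (1:ℝ) else 0) * (z j - z k)^2 = 0 := by
    apply Finset.sum_eq_zero
    intro j _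
    apply Finset.sum_eq_zero
    intro k _
    by_cases h : j = k
    · subst h; simp
    · simp [h]
  have hQ : ∑ j, ∑ k, a j k * (z j - z k)^2 = 2*D2 - 2*q := by
    have hQjk : ∀ j k, a j k * (z j - z k)^2
        = (a j k * z j^2 + a j k * z k^2) - 2*(a j k * z j * z k) := fun j k => by ring
    simp only [hQjk]
    simp only [Finset.sum_sub_distrib, Finset.sum_add_distrib]
    have h1 : ∑ j, ∑ k, a j k * z j^2 = D2 := by
      rw [hD2]
      apply Finset.sum_congr rfl
      intro j _
      rw [← Finset.sum_mul, hrowsum]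
    have h2 : ∑ j, ∑ k, a j k * z k^2 = D2 := by
      rw [Finset.sum_comm, hD2]
      apply Finset.sum_congr rfl
      intro k _
      rw [← Finset.sum_mul, hcolsum]
    have h3 : ∑ j, ∑ k, 2*(a j k * z j * z k) = 2*q := by
      rw [hq, Finset.mul_sum]
      apply Finset.sum_congr rfl
      intro j _
      rw [Finset.mul_sum]
    rw [h1, h2, h3]
    ring
  have hnn : 0 ≤ ∑ j, ∑ k, (1 - a j k - (if j = k then (1:ℝ) else 0)) * (z j - z k)^2 := by
    apply Finset.sum_nonneg; intro j _
    apply Finset.sum_nonneg; intro k _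
    apply mul_nonneg _ (sq_nonneg _)
    by_cases h : j = k
    · subst h; simp [ha, G.irrefl]
    · simp only [if_neg h, sub_zero, sub_nonneg, ha]
      by_cases hadj : G.Adj j k <;> simp [hadj]
  have hsplit : ∑ j, ∑ k, (1 - a j k - (if j = k then (1:ℝ) else 0)) * (z j - z k)^2
      = (∑ j, ∑ k, (z j - z k)^2) - (∑ j, ∑ k, a j k * (z j - z k)^2)
        - ∑ j, ∑ k, (if j = k then (1:ℝ) else 0) * (z j - z k)^2 := by
    have h : ∀ j k, (1 - a j k - (if j = k then (1:ℝ) else 0)) * (z j - z k)^2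
        = (z j - z k)^2 - a j k * (z j - z k)^2
          - (if j = k then (1:ℝ) else 0) * (z j - z k)^2 := fun j k => by ring
    simp only [h, Finset.sum_sub_distrib]
  rw [hsplit, hP, hQ, hR] at hnn
  linarith

end helpers

set_option maxHeartbeats 1000000 in
/-- If `t > s` and `δ(G) > t − s`, then `μ(H) > t − s`, the matrix
`Q_μ = Q(G) + sI − (s/(t−μ))J` has all off-diagonal entries strictly negative
(it is a `Z`-matrix), and `H = \overline{K}_s ∨ G` is `S`-Roth. -/
theorem stmt14 {s t : ℕ} (hts : s < t) (G : SimpleGraph (Fin t))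
    (hδ : t - s < G.minDegree) (μ : ℝ)
    (hμ : ∃ x : Fin s ⊕ Fin t → ℝ, x ≠ 0 ∧ signlessLap (joinEmpty s G) *ᵥ x = μ • x)
    (hmin : ∀ (ν : ℝ) (x : Fin s ⊕ Fin t → ℝ), x ≠ 0 →
      signlessLap (joinEmpty s G) *ᵥ x = ν • x → μ ≤ ν) :
    (t : ℝ) - s < μ ∧
    (∀ i j : Fin t, i ≠ j → signlessLap G i j - s / ((t : ℝ) - μ) < 0) ∧
    IsSRoth (s := s) G μ := by
  classical
  have ht1 : 1 ≤ t := by omega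
  have j0 : Fin t := ⟨0, ht1⟩
  haveI : Nonempty (Fin t) := ⟨j0⟩
  have hs2 : 2 ≤ s := by
    by_contra h
    push_neg at h
    have hd := G.minDegree_le_degree j0
    have hlt := G.degree_lt_card_verts j0
    rw [Fintype.card_fin] at hlt
    omega
  have hs2R : (2:ℝ) ≤ (s:ℝ) := by exact_mod_cast hs2
  have htR : (3:ℝ) ≤ (t:ℝ) := by exact_mod_cast (by omega : 3 ≤ t)
  have hδR : ((t:ℝ) - s) + 1 ≤ (G.minDegree : ℝ) := by
    have h1 : t - s + 1 ≤ G.minDegree := hδ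
    have h2 : ((t - s + 1 : ℕ) : ℝ) ≤ (G.minDegree : ℝ) := Nat.cast_le.mpr h1
    push_cast [Nat.cast_sub hts.le] at h2
    linarith
  have hherm := signlessLap_isHermitian (joinEmpty s G)
  have hray : ∀ x : Fin s ⊕ Fin t → ℝ,
      μ * (x ⬝ᵥ x) ≤ x ⬝ᵥ (signlessLap (joinEmpty s G) *ᵥ x) := ray_lb hherm hmin
  -- ### Part 1 : t - s < μ
  have part1 : (t:ℝ) - s < μ := by
    obtain ⟨x, hx0, hxe⟩ := hμ
    have hdot : x ⬝ᵥ (signlessLap (joinEmpty s G) *ᵥ x) = μ * (x ⬝ᵥ x) := by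
      rw [hxe, dotProduct_smul, smul_eq_mul]
    have hquad := quad_identity G x
    have hKI := key_ineq G (fun j => x (Sum.inr j))
    have hself := dot_self_eq x
    set Sy := ∑ i, x (Sum.inl i)^2 with hSydef
    set S2 := ∑ j, x (Sum.inr j)^2 with hS2def
    set Y := ∑ i, x (Sum.inl i) with hYdef
    set Z := ∑ j, x (Sum.inr j) with hZdef
    set D2 := ∑ j, (G.degree j : ℝ) * x (Sum.inr j)^2 with hD2def
    set q := ∑ j, ∑ k, (if G.Adj j k then (1:ℝ) else 0) * x (Sum.inr j) * x (Sum.inr k) with hqdef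
    have hEq : μ * (Sy + S2) = (t:ℝ)*Sy + (s:ℝ)*S2 + 2*Y*Z + D2 + q := by
      rw [← hself, ← hdot, hquad]
    have hD2lb : (G.minDegree : ℝ) * S2 ≤ D2 := by
      rw [hD2def, hS2def, Finset.mul_sum]
      exact Finset.sum_le_sum fun j _ =>
        mul_le_mul_of_nonneg_right (Nat.cast_le.mpr (G.minDegree_le_degree j)) (sq_nonneg _)
    have hCSy : Y^2 ≤ (s:ℝ) * Sy := by
      have h := sq_sum_le_card_mul_sum_sq (s := (univ : Finset (Fin s)))
        (f := fun i => x (Sum.inl i))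
      simpa [card_univ] using h
    have hCSz : Z^2 ≤ (t:ℝ) * S2 := by
      have h := sq_sum_le_card_mul_sum_sq (s := (univ : Finset (Fin t)))
        (f := fun j => x (Sum.inr j))
      simpa [card_univ] using h
    have hSynn : 0 ≤ Sy := Finset.sum_nonneg fun _ _ => sq_nonneg _
    have hS2nn : 0 ≤ S2 := Finset.sum_nonneg fun _ _ => sq_nonneg _
    have hpos : 0 < Sy + S2 := by
      rw [← hself]
      obtain ⟨u, hu⟩ := Function.ne_iff.mp hx0
      rw [dotProduct]
      exact Finset.sum_pos' (fun v _ => mul_self_nonneg (x v))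
        ⟨u, mem_univ u, mul_self_pos.mpr hu⟩
    by_contra hc
    push_neg at hc
    have h1 : μ * (Sy + S2) ≤ ((t:ℝ) - s) * (Sy + S2) :=
      mul_le_mul_of_nonneg_right hc (by linarith)
    have h2 : (((t:ℝ) - s) + 1) * S2 ≤ (G.minDegree : ℝ) * S2 :=
      mul_le_mul_of_nonneg_right hδR hS2nn
    nlinarith [sq_nonneg (Y + Z), sq_nonneg (Y + 2*Z), hKI, hD2lb, hCSy, hCSz, hEq, hδR,
      hs2R, hSynn, hS2nn, hpos, h1, h2]
  -- ### μ < t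
  have part_lt : μ < (t:ℝ) := by
    obtain ⟨dR, hdR⟩ : ∃ d : ℝ, d = (G.degree j0 : ℝ) := ⟨_, rfl⟩
    have hdRnn : 0 ≤ dR := by rw [hdR]; exact Nat.cast_nonneg _
    obtain ⟨aR, haR⟩ : ∃ a : ℝ, a = -((t:ℝ) + s + dR) := ⟨_, rfl⟩
    obtain ⟨u, hu⟩ : ∃ u : Fin s ⊕ Fin t → ℝ,
      u = Sum.elim (fun _ => aR) (fun k => if k = j0 then (1:ℝ) else 0) := ⟨_, rfl⟩
    have hru := hray u
    have hquadu := quad_identity G u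
    have hselfu := dot_self_eq u
    have e1 : ∑ i : Fin s, u (Sum.inl i) = (s:ℝ) * aR := by
      simp [hu, Finset.sum_const, card_univ, nsmul_eq_mul]
    have e2 : ∑ i : Fin s, u (Sum.inl i)^2 = (s:ℝ) * aR^2 := by
      simp [hu, Finset.sum_const, card_univ, nsmul_eq_mul]
    have e3 : ∑ k : Fin t, u (Sum.inr k) = 1 := by simp [hu]
    have e4 : ∑ k : Fin t, u (Sum.inr k)^2 = 1 := by
      have h : ∀ k : Fin t, u (Sum.inr k)^2 = u (Sum.inr k) := by
        intro k; by_cases h : k = j0 <;> simp [hu, h]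
      rw [Finset.sum_congr rfl fun k _ => h k, e3]
    have e5 : ∑ k : Fin t, (G.degree k : ℝ) * u (Sum.inr k)^2 = dR := by
      have h : ∀ k : Fin t, (G.degree k : ℝ) * u (Sum.inr k)^2
          = if k = j0 then (G.degree k:ℝ) else 0 := by
        intro k; by_cases h : k = j0 <;> simp [hu, h]
      rw [Finset.sum_congr rfl fun k _ => h k]
      rw [Finset.sum_ite_eq' univ j0 (fun k => (G.degree k : ℝ))]
      simp [hdR]
    have e6 : ∑ j, ∑ k, (if G.Adj j k then (1:ℝ) else 0) * u (Sum.inr j) * u (Sum.inr k) = 0 := by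
      apply Finset.sum_eq_zero; intro j' _
      apply Finset.sum_eq_zero; intro k _
      by_cases h1 : j' = j0
      · by_cases h2 : k = j0
        · subst h2; subst h1
          have : ¬ G.Adj j' j' := G.irrefl
          simp [hu, this]
        · simp [hu, h2]
      · simp [hu, h1]
    rw [hselfu, e2, e4, hquadu, e1, e3, e5, e6] at hru
    by_contra hc
    push_neg at hc
    have hpos1 : 0 < (s:ℝ) * aR^2 + 1 := by positivity
    have h2 : (t:ℝ) * ((s:ℝ)*aR^2 + 1) ≤ μ * ((s:ℝ)*aR^2+1) :=
      mul_le_mul_of_nonneg_right hc (le_of_lt hpos1)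
    have h3 : (s:ℝ)*aR = -((s:ℝ)*((t:ℝ)+s+dR)) := by rw [haR]; ring
    nlinarith [h2, hru, hs2R, htR, hdRnn, h3,
      mul_nonneg (by linarith : (0:ℝ) ≤ (s:ℝ) - 1) (by linarith : (0:ℝ) ≤ (t:ℝ)+s+dR)]
  -- ### Part 2 : Z-matrix
  have part2 : ∀ i j : Fin t, i ≠ j → signlessLap G i j - s / ((t : ℝ) - μ) < 0 := by
    intro i j hij
    have h1 : (0:ℝ) < (t:ℝ) - μ := by linarith
    have h2 : (t:ℝ) - μ < s := by linarith [part1]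
    have h3 : (1:ℝ) < (s:ℝ) / ((t:ℝ) - μ) := (one_lt_div h1).mpr h2
    have h4 : signlessLap G i j ≤ 1 := by
      simp only [signlessLap, if_neg hij, zero_add]
      by_cases h : G.Adj i j <;> simp [h]
    linarith
  refine ⟨part1, part2, ?_⟩
  -- ### Part 3 : S-Roth
  intro x hx0 hxe
  have htμpos : (0:ℝ) < (t:ℝ) - μ := by linarith
  have hμtneg : μ - (t:ℝ) < 0 := by linarith
  have htμne : (t:ℝ) - μ ≠ 0 := ne_of_gt htμpos
  have hμtne : μ - (t:ℝ) ≠ 0 := ne_of_lt hμtneg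
  obtain ⟨Z, hZ⟩ : ∃ Zv : ℝ, Zv = ∑ j, x (Sum.inr j) := ⟨_, rfl⟩
  obtain ⟨z, hz⟩ : ∃ z : Fin t → ℝ, z = fun j => x (Sum.inr j) := ⟨_, rfl⟩
  have hxz : ∀ j, z j = x (Sum.inr j) := fun j => by rw [hz]
  have hZsum : ∑ k, z k = Z := by rw [hZ]; exact Finset.sum_congr rfl fun k _ => hxz k
  have hrowl : ∀ i, x (Sum.inl i) = Z / (μ - (t:ℝ)) := by
    intro i
    have h := congrFun hxe (Sum.inl i)
    rw [row_inl] at h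
    simp only [Pi.smul_apply, smul_eq_mul] at h
    rw [← hZ] at h
    field_simp
    linarith
  have hzne : z ≠ 0 := by
    intro hc
    apply hx0
    have hZ0 : Z = 0 := by
      rw [← hZsum]
      apply Finset.sum_eq_zero
      intro k _
      exact congrFun hc k
    funext u
    cases u with
    | inl i => rw [hrowl i, hZ0]; simp
    | inr j =>
      have h0 := congrFun hc j
      rw [hxz j] at h0
      simpa using h0
  obtain ⟨M, hM⟩ : ∃ M : Matrix (Fin t) (Fin t) ℝ,
      M = fun j k => signlessLap G j k + (if j = k then (s:ℝ) else 0) - (s:ℝ)/((t:ℝ)-μ) :=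
    ⟨_, rfl⟩
  have hMapp : ∀ j k, M j k = signlessLap G j k + (if j = k then (s:ℝ) else 0) - (s:ℝ)/((t:ℝ)-μ) := by
    intro j k; rw [hM]
  have hoffM : ∀ j k : Fin t, j ≠ k → M j k < 0 := by
    intro j k hjk
    rw [hMapp, if_neg hjk, add_zero]
    exact part2 j k hjk
  have hQsymm : ∀ j k : Fin t, signlessLap G j k = signlessLap G k j := by
    intro j k
    conv_lhs => rw [← (signlessLap_isHermitian G).eq]
    simp [conjTranspose_apply]
  have hMherm : M.IsHermitian := by
    ext j k
    simp only [conjTranspose_apply, star_trivial, hMapp]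
    rw [hQsymm k j]
    by_cases h : j = k
    · subst h; rfl
    · rw [if_neg h, if_neg (Ne.symm h)]
  have hMz : M *ᵥ z = μ • z := by
    funext j
    have h := congrFun hxe (Sum.inr j)
    rw [row_inr] at h
    simp only [Pi.smul_apply, smul_eq_mul] at h
    have hY : ∑ i : Fin s, x (Sum.inl i) = (s:ℝ) * (Z / (μ - (t:ℝ))) := by
      rw [Finset.sum_congr rfl fun i _ => hrowl i, Finset.sum_const, card_univ,
        Fintype.card_fin, nsmul_eq_mul]
    rw [hY] at h
    have hMrow : (M *ᵥ z) j = (G.degree j : ℝ) * z j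
        + (∑ k, (if G.Adj j k then (1:ℝ) else 0) * z k) + (s:ℝ) * z j
        - ((s:ℝ)/((t:ℝ)-μ)) * (∑ k, z k) := by
      rw [mulVec, dotProduct]
      have hterm : ∀ k, M j k * z k = (if j = k then (G.degree j:ℝ) * z k else 0)
          + ((if G.Adj j k then (1:ℝ) else 0) * z k + ((if j = k then (s:ℝ) * z k else 0)
          - ((s:ℝ)/((t:ℝ)-μ)) * z k)) := by
        intro k
        rw [hMapp]
        simp only [signlessLap]
        by_cases hh : j = k
        · subst hh; by_cases h2 : G.Adj j j <;> simp [h2] <;> ring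
        · by_cases h2 : G.Adj j k <;> simp [hh, h2] <;> ring
      simp only [hterm]
      rw [Finset.sum_add_distrib, Finset.sum_add_distrib, Finset.sum_sub_distrib,
        Finset.sum_ite_eq univ j (fun k => (G.degree j:ℝ) * z k),
        Finset.sum_ite_eq univ j (fun k => (s:ℝ) * z k), ← Finset.mul_sum]
      simp only [mem_univ, if_true]
      ring
    rw [hMrow, hZsum, Pi.smul_apply, smul_eq_mul]
    have hzkx : ∑ k, (if G.Adj j k then (1:ℝ) else 0) * z k
        = ∑ k, (if G.Adj j k then (1:ℝ) else 0) * x (Sum.inr k) :=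
      Finset.sum_congr rfl fun k _ => by rw [hxz]
    rw [hzkx, hxz j]
    have hfrac : (s:ℝ) * (Z/(μ - (t:ℝ))) = -(((s:ℝ)/((t:ℝ)-μ)) * Z) := by
      field_simp
      ring
    rw [hfrac] at h
    nlinarith [h]
  have hrayM : ∀ w : Fin t → ℝ, μ * (w ⬝ᵥ w) ≤ w ⬝ᵥ (M *ᵥ w) := by
    intro w
    obtain ⟨W, hW⟩ : ∃ Wv : ℝ, Wv = ∑ k, w k := ⟨_, rfl⟩
    obtain ⟨c, hcdef⟩ : ∃ cv : ℝ, cv = -W/((t:ℝ)-μ) := ⟨_, rfl⟩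
    obtain ⟨v, hv⟩ : ∃ v : Fin s ⊕ Fin t → ℝ,
        v = Sum.elim (fun _ => c) w := ⟨_, rfl⟩
    have hrv := hray v
    have hqv := quad_identity G v
    have hsv := dot_self_eq v
    have f1 : ∑ i : Fin s, v (Sum.inl i) = (s:ℝ)*c := by
      simp [hv, Finset.sum_const, card_univ, nsmul_eq_mul]
    have f2 : ∑ i : Fin s, v (Sum.inl i)^2 = (s:ℝ)*c^2 := by
      simp [hv, Finset.sum_const, card_univ, nsmul_eq_mul]
    have f3 : ∑ k, v (Sum.inr k) = W := by rw [hW]; simp [hv]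
    have f4 : ∑ k, v (Sum.inr k)^2 = ∑ k, w k^2 := by simp [hv]
    have f5 : ∑ k, (G.degree k:ℝ) * v (Sum.inr k)^2 = ∑ k, (G.degree k:ℝ) * w k^2 := by
      simp [hv]
    have f6 : ∑ j, ∑ k, (if G.Adj j k then (1:ℝ) else 0) * v (Sum.inr j) * v (Sum.inr k)
        = ∑ j, ∑ k, (if G.Adj j k then (1:ℝ) else 0) * w j * w k := by
      simp [hv]
    rw [hsv, f2, f4, hqv, f1, f3, f5, f6] at hrv
    have hww : w ⬝ᵥ w = ∑ k, w k^2 := by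
      rw [dotProduct]; exact Finset.sum_congr rfl fun _ _ => by ring
    have hMq : w ⬝ᵥ (M *ᵥ w) = (∑ k, (G.degree k:ℝ) * w k^2)
        + (∑ j, ∑ k, (if G.Adj j k then (1:ℝ) else 0) * w j * w k)
        + (s:ℝ)*(∑ k, w k^2) - ((s:ℝ)/((t:ℝ)-μ))*W^2 := by
      rw [dotProduct]
      have hMrow : ∀ j, (M *ᵥ w) j = (G.degree j : ℝ) * w j
          + (∑ k, (if G.Adj j k then (1:ℝ) else 0) * w k) + (s:ℝ) * w j
          - ((s:ℝ)/((t:ℝ)-μ)) * W := by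
        intro j
        rw [mulVec, dotProduct]
        have hterm : ∀ k, M j k * w k = (if j = k then (G.degree j:ℝ) * w k else 0)
            + ((if G.Adj j k then (1:ℝ) else 0) * w k + ((if j = k then (s:ℝ) * w k else 0)
            - ((s:ℝ)/((t:ℝ)-μ)) * w k)) := by
          intro k
          rw [hMapp]
          simp only [signlessLap]
          by_cases hh : j = k
          · subst hh; by_cases h2 : G.Adj j j <;> simp [h2] <;> ring
          · by_cases h2 : G.Adj j k <;> simp [hh, h2] <;> ring
        simp only [hterm]
        rw [Finset.sum_add_distrib, Finset.sum_add_distrib, Finset.sum_sub_distrib,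
          Finset.sum_ite_eq univ j (fun k => (G.degree j:ℝ) * w k),
          Finset.sum_ite_eq univ j (fun k => (s:ℝ) * w k), ← Finset.mul_sum, ← hW]
        simp only [mem_univ, if_true]
        ring
      have hterm2 : ∀ j, w j * (M *ᵥ w) j = (G.degree j : ℝ) * w j^2
          + (∑ k, (if G.Adj j k then (1:ℝ) else 0) * w j * w k) + (s:ℝ) * w j^2
          - (((s:ℝ)/((t:ℝ)-μ)) * W) * w j := by
        intro j
        have hdist : ∑ k, w j * ((if G.Adj j k then (1:ℝ) else 0) * w k)
            = ∑ k, (if G.Adj j k then (1:ℝ) else 0) * w j * w k :=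
          Finset.sum_congr rfl fun k _ => by ring
        rw [hMrow j, mul_sub, mul_add, mul_add, Finset.mul_sum, hdist]
        ring
      simp only [hterm2]
      rw [Finset.sum_sub_distrib, Finset.sum_add_distrib, Finset.sum_add_distrib,
        ← Finset.mul_sum, ← Finset.mul_sum, ← hW]
      ring
    rw [hww, hMq]
    have hkey : (t:ℝ)*((s:ℝ)*c^2) + 2*((s:ℝ)*c)*W + ((s:ℝ)/((t:ℝ)-μ))*W^2
        - μ*((s:ℝ)*c^2) = 0 := by
      rw [hcdef]
      field_simp
      ring
    nlinarith [hrv, hkey]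
  rcases sign_of_min hMherm hoffM hrayM hzne hMz with hsgn | hsgn
  · right
    have hZpos : 0 < Z := by
      rw [← hZsum]
      exact Finset.sum_pos (fun k _ => hsgn k) univ_nonempty
    constructor
    · intro i
      rw [hrowl i]
      exact div_neg_of_pos_of_neg hZpos hμtneg
    · intro j
      rw [← hxz j]
      exact hsgn j
  · left
    have hZneg : Z < 0 := by
      rw [← hZsum]
      exact Finset.sum_neg (fun k _ => hsgn k) univ_nonempty
    constructor
    · intro i
      rw [hrowl i]
      exact div_pos_of_neg_of_neg hZneg hμtneg
    · intro j
      rw [← hxz j]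
      exact hsgn j
end

section
/- Let A = Q(C_k) + λI where C_k is the cycle on k vertices and λ > 0, and let Ã = A^{-1}. Then each diagonal entry satisfies ã_{ii} ≤ (λ+1)/(λ(λ+3)), and each off-diagonal entry satisfies |ã_{ij}| ≤ ã_{ii}/(λ+1) for j ≠ i. -/
open Matrix SimpleGraph
open scoped Classical

namespace Stmt19Aux

def P (m : ℕ) : Matrix (Fin (m+3)) (Fin (m+3)) ℝ :=
  Matrix.of fun i j => if j = i + 1 then 1 else 0

variable {m : ℕ}

lemma one_ne_zero' : (1 : Fin (m+3)) ≠ 0 := by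
  simp only [ne_eq, Fin.ext_iff]
  simp [Fin.val_one]

lemma two_ne_zero' : (1 + 1 : Fin (m+3)) ≠ 0 := by
  simp only [ne_eq, Fin.ext_iff]
  have : ((1 + 1 : Fin (m+3))).val = 2 := by
    rw [Fin.val_add_eq_of_add_lt] <;> simp only [Fin.val_one] <;> omega
  rw [this]
  simp

lemma ne_add_one (i : Fin (m+3)) : i ≠ i + 1 := fun h =>
  one_ne_zero' (left_eq_add.mp h)

lemma ne_add_two (i : Fin (m+3)) : i ≠ i + 1 + 1 := fun h =>
  two_ne_zero' (left_eq_add.mp (by rwa [add_assoc] at h))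

lemma P_mul_apply (M : Matrix (Fin (m+3)) (Fin (m+3)) ℝ) (i j : Fin (m+3)) :
    (P m * M) i j = M (i+1) j := by
  simp [P, Matrix.mul_apply, ite_mul]

lemma Pt_mul_apply (M : Matrix (Fin (m+3)) (Fin (m+3)) ℝ) (i j : Fin (m+3)) :
    ((P m)ᵀ * M) i j = M (i-1) j := by
  simp only [Matrix.mul_apply, Matrix.transpose_apply, P, Matrix.of_apply, ite_mul, one_mul,
    zero_mul]
  have : ∀ x : Fin (m+3), (i = x + 1) ↔ (x = i - 1) := by
    intro x; constructor <;> intro h <;> subst h <;> simp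
  simp only [this]
  simp

lemma mul_P_apply (M : Matrix (Fin (m+3)) (Fin (m+3)) ℝ) (i j : Fin (m+3)) :
    (M * P m) i j = M i (j-1) := by
  simp only [Matrix.mul_apply, P, Matrix.of_apply, mul_ite, mul_one, mul_zero]
  have : ∀ x : Fin (m+3), (j = x + 1) ↔ (x = j - 1) := by
    intro x; constructor <;> intro h <;> subst h <;> simp
  simp only [this]
  simp

lemma P_mul_Pt : P m * (P m)ᵀ = 1 := by
  ext i j
  rw [Matrix.mul_apply]
  simp only [Matrix.transpose_apply, P, Matrix.of_apply, Matrix.one_apply]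
  rw [Finset.sum_eq_single (i+1)]
  · simp [eq_comm]
  · intro b _ hb
    simp only [ite_mul, one_mul, zero_mul]
    rw [if_neg (fun h => hb h)]
  · simp

lemma Pt_mul_P : (P m)ᵀ * P m = 1 := by
  ext i j
  rw [Pt_mul_apply]
  simp only [P, Matrix.of_apply, Matrix.one_apply]
  congr 1
  simp [sub_add_cancel, eq_comm]

lemma trace_P : (P m).trace = 0 := by
  rw [Matrix.trace]
  apply Finset.sum_eq_zero
  intro i _
  simp only [Matrix.diag_apply, P, Matrix.of_apply]
  exact if_neg (ne_add_one i)

lemma trace_PP : (P m * P m).trace = 0 := by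
  rw [Matrix.trace]
  apply Finset.sum_eq_zero
  intro i _
  rw [Matrix.diag_apply, P_mul_apply]
  simp only [P, Matrix.of_apply]
  exact if_neg (ne_add_two i)

lemma diag_nonneg {n : ℕ} {M : Matrix (Fin n) (Fin n) ℝ} (hM : M.PosSemidef) (i : Fin n) :
    0 ≤ M i i := by
  exact hM.diag_nonneg

lemma trace_nonneg' {n : ℕ} {M : Matrix (Fin n) (Fin n) ℝ} (hM : M.PosSemidef) :
    0 ≤ M.trace := by
  rw [Matrix.trace]
  exact Finset.sum_nonneg fun i _ => diag_nonneg hM i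

open Fin.CommRing in
lemma adj_iff (i j : Fin (m+3)) :
    (SimpleGraph.cycleGraph (m+3)).Adj i j ↔ (i = j + 1 ∨ j = i + 1) := by
  have h := @SimpleGraph.cycleGraph_adj (m+1) i j
  rw [h]
  constructor
  · rintro (h1 | h1)
    · left; rw [sub_eq_iff_eq_add] at h1; rw [h1]; exact add_comm 1 j
    · right; rw [sub_eq_iff_eq_add] at h1; rw [h1]; exact add_comm 1 i
  · rintro (h1 | h1)
    · left; rw [h1]; ring
    · right; rw [h1]; ring

lemma signlessLap_eq :
    signlessLap (SimpleGraph.cycleGraph (m+3)) = (2 : ℝ) • 1 + (P m + (P m)ᵀ) := by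
  ext i j
  have hdeg : @SimpleGraph.degree _ (SimpleGraph.cycleGraph (m+3)) i
      (@SimpleGraph.neighborSetFintype _ (SimpleGraph.cycleGraph (m+3)) _
        (fun a b => Classical.propDecidable _) i) = 2 := by
    have h := @SimpleGraph.cycleGraph_degree_three_le m i
    convert h using 2
  unfold signlessLap
  simp only [hdeg, adj_iff, Matrix.add_apply, Matrix.smul_apply, Matrix.one_apply,
    Matrix.transpose_apply, P, Matrix.of_apply, smul_eq_mul]
  by_cases hij : i = j
  · subst hij; norm_num [hdeg]
  · by_cases h1 : j = i + 1
    · have h2 : ¬ (i = j + 1) := fun h2 => ne_add_two i (by rwa [h1] at h2)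
      norm_num [hij, h1, h2, ne_add_two]
    · by_cases h2 : i = j + 1
      · norm_num [hij, h1, h2, ne_add_two]
      · norm_num [hij, h1, h2]

end Stmt19Aux

open Stmt19Aux

open Fin.CommRing in
/-- For `A = Q(C_k) + λI` with `λ > 0` and `Ã = A⁻¹`: every diagonal entry satisfies
`ã_{ii} ≤ (λ+1)/(λ(λ+3))`, and every off-diagonal entry satisfies
`|ã_{ij}| ≤ ã_{ii}/(λ+1)`. -/
theorem stmt19 {k : ℕ} (hk : 3 ≤ k) (lam : ℝ) (hlam : 0 < lam)
    (A : Matrix (Fin k) (Fin k) ℝ)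
    (hA : A = signlessLap (SimpleGraph.cycleGraph k) +
      lam • (1 : Matrix (Fin k) (Fin k) ℝ)) :
    (∀ i : Fin k, A⁻¹ i i ≤ (lam + 1) / (lam * (lam + 3))) ∧
    (∀ i j : Fin k, j ≠ i → |A⁻¹ i j| ≤ A⁻¹ i i / (lam + 1)) := by
  obtain ⟨m, rfl⟩ := Nat.exists_eq_add_of_le' hk
  subst hA
  set Q := signlessLap (SimpleGraph.cycleGraph (m+3)) with hQdef
  set A := Q + lam • (1 : Matrix (Fin (m+3)) (Fin (m+3)) ℝ) with hAdef
  -- basic representation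
  have hA2 : A = (lam + 2) • 1 + P m + (P m)ᵀ := by
    rw [hAdef, hQdef, signlessLap_eq]; module
  have hAsymm : Aᵀ = A := by
    rw [hA2]
    simp only [Matrix.transpose_add, Matrix.transpose_smul, Matrix.transpose_one,
      Matrix.transpose_transpose]
    abel
  have hPA : A * P m = P m * A := by
    rw [hA2]
    simp only [Matrix.add_mul, Matrix.mul_add, Matrix.smul_mul, Matrix.mul_smul,
      Matrix.one_mul, Matrix.mul_one, P_mul_Pt, Pt_mul_P]
  have hPtA : A * (P m)ᵀ = (P m)ᵀ * A := by
    rw [hA2]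
    simp only [Matrix.add_mul, Matrix.mul_add, Matrix.smul_mul, Matrix.mul_smul,
      Matrix.one_mul, Matrix.mul_one, P_mul_Pt, Pt_mul_P]
  -- positive definiteness
  set S : Matrix (Fin (m+3)) (Fin (m+3)) ℝ := 1 + P m with hSdef
  have hSt : Sᵀ = 1 + (P m)ᵀ := by
    rw [hSdef, Matrix.transpose_add, Matrix.transpose_one]
  have hSS : S * Sᵀ = (2 : ℝ) • 1 + P m + (P m)ᵀ := by
    rw [hSdef, hSt]
    simp only [Matrix.add_mul, Matrix.mul_add, Matrix.one_mul, Matrix.mul_one, P_mul_Pt]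
    rw [two_smul]
    abel
  have hQ2 : A - lam • 1 = S * Sᵀ := by
    rw [hA2, hSS]; module
  have hSct : Sᴴ = Sᵀ := Matrix.conjTranspose_eq_transpose_of_trivial S
  have psdSS : (S * Sᵀ).PosSemidef := by
    rw [← hSct]
    exact Matrix.posSemidef_self_mul_conjTranspose S
  have hl1pd : (lam • (1 : Matrix (Fin (m+3)) (Fin (m+3)) ℝ)).PosDef := by
    rw [Matrix.smul_one_eq_diagonal]
    exact Matrix.PosDef.diagonal (fun _ => hlam)
  have hApd : A.PosDef := by
    have : A = lam • 1 + S * Sᵀ := by rw [← hQ2]; abel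
    rw [this]
    exact hl1pd.add_posSemidef psdSS
  have hdet : IsUnit A.det := (Matrix.isUnit_iff_isUnit_det A).mp hApd.isUnit
  set B := A⁻¹ with hBdef
  have hAB : A * B = 1 := Matrix.mul_nonsing_inv A hdet
  have hBA : B * A = 1 := Matrix.nonsing_inv_mul A hdet
  have hBpd : B.PosDef := hApd.inv
  -- shift invariance of B
  have hBP : P m * B = B * P m := by
    calc P m * B = B * A * (P m * B) := by rw [hBA, Matrix.one_mul]
    _ = B * (A * P m) * B := by simp only [Matrix.mul_assoc]
    _ = B * (P m * A) * B := by rw [hPA]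
    _ = B * P m * (A * B) := by simp only [Matrix.mul_assoc]
    _ = B * P m := by rw [hAB, Matrix.mul_one]
  have hshift : ∀ i j : Fin (m+3), B (i+1) (j+1) = B i j := by
    intro i j
    have h := congrFun (congrFun hBP i) (j+1)
    rw [P_mul_apply, mul_P_apply, add_sub_cancel_right] at h
    exact h
  have hdiag : ∀ i : Fin (m+3), B i i = B 0 0 := by
    have key : ∀ c : ℕ, B ((c : Fin (m+3))) ((c : Fin (m+3))) = B 0 0 := by
      intro c
      induction c with
      | zero => simp
      | succ n ih =>
        have hc : ((n+1 : ℕ) : Fin (m+3)) = ((n : ℕ) : Fin (m+3)) + 1 := by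
          push_cast; ring
        rw [hc, hshift]; exact ih
    intro i
    have h := key i.val
    rwa [Fin.cast_val_eq_self] at h
  -- traces
  have trOne : (1 : Matrix (Fin (m+3)) (Fin (m+3)) ℝ).trace = ((m:ℝ)+3) := by
    rw [Matrix.trace_one]
    simp [Fintype.card_fin]
  have trA : A.trace = ((m:ℝ)+3) * (lam+2) := by
    rw [hA2, Matrix.trace_add, Matrix.trace_add, Matrix.trace_smul, Matrix.trace_transpose,
      trace_P, trOne, smul_eq_mul]
    ring
  have hAA : A * A = ((lam+2)*(lam+2)) • (1 : Matrix (Fin (m+3)) (Fin (m+3)) ℝ)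
      + (2*(lam+2)) • P m + (2*(lam+2)) • (P m)ᵀ + (P m * P m) + (P m * P m)ᵀ
      + (2:ℝ) • 1 := by
    rw [hA2]
    simp only [Matrix.add_mul, Matrix.mul_add, Matrix.smul_mul, Matrix.mul_smul,
      Matrix.one_mul, Matrix.mul_one, smul_smul, P_mul_Pt, Pt_mul_P, Matrix.transpose_mul]
    module
  have trA2 : (A*A).trace = ((m:ℝ)+3) * ((lam+2)^2 + 2) := by
    rw [hAA]
    simp only [Matrix.trace_add, Matrix.trace_smul, Matrix.trace_transpose, trace_P,
      trace_PP, trOne, smul_eq_mul]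
    ring
  set N : Matrix (Fin (m+3)) (Fin (m+3)) ℝ :=
    A*A - (lam + 2*(lam+3)) • A + ((lam+3)^2 + 2*lam*(lam+3)) • 1 with hNdef
  have trN : N.trace = ((m:ℝ)+3) * ((lam+1)*(lam+3)) := by
    rw [hNdef, Matrix.trace_add, Matrix.trace_sub, Matrix.trace_smul, Matrix.trace_smul,
      trA, trA2, trOne, smul_eq_mul, smul_eq_mul]
    ring
  set D : Matrix (Fin (m+3)) (Fin (m+3)) ℝ := A - (lam+3) • 1 with hDdef
  have hDt : Dᵀ = D := by
    rw [hDdef, Matrix.transpose_sub, Matrix.transpose_smul, Matrix.transpose_one, hAsymm]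
  have hSD : Sᵀ * D = D * Sᵀ := by
    rw [hSt, hDdef]
    simp only [Matrix.add_mul, Matrix.mul_add, Matrix.sub_mul, Matrix.mul_sub,
      Matrix.one_mul, Matrix.mul_one, Matrix.smul_mul, Matrix.mul_smul, hPtA]
    module
  set R : Matrix (Fin (m+3)) (Fin (m+3)) ℝ := S * D with hRdef
  have hW : (A - lam • 1) * (D * D) = R * Rᵀ := by
    rw [hQ2, hRdef, Matrix.transpose_mul, hDt]
    calc S * Sᵀ * (D * D) = S * (Sᵀ * D * D) := by simp only [Matrix.mul_assoc]
    _ = S * (D * Sᵀ * D) := by rw [hSD]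
    _ = S * (D * (Sᵀ * D)) := by simp only [Matrix.mul_assoc]
    _ = S * (D * (D * Sᵀ)) := by rw [hSD]
    _ = S * D * (D * Sᵀ) := by simp only [Matrix.mul_assoc]
  have hkey : A * N - (lam*(lam+3)^2) • 1 = (A - lam • 1) * (D * D) := by
    rw [hNdef, hDdef]
    simp only [Matrix.mul_sub, Matrix.sub_mul, Matrix.mul_add, Matrix.add_mul,
      Matrix.mul_smul, Matrix.smul_mul, Matrix.mul_one, Matrix.one_mul, smul_smul]
    module
  have hNB : N - (lam*(lam+3)^2) • B = B * (R * Rᵀ) := by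
    rw [← hW, ← hkey, Matrix.mul_sub, Matrix.mul_smul, Matrix.mul_one, ← Matrix.mul_assoc,
      hBA, Matrix.one_mul]
  have hRct : Rᴴ = Rᵀ := Matrix.conjTranspose_eq_transpose_of_trivial R
  have psd2 : (Rᵀ * B * R).PosSemidef := by
    have h := hBpd.posSemidef.conjTranspose_mul_mul_same R
    rwa [hRct] at h
  have htr : 0 ≤ (N - (lam*(lam+3)^2) • B).trace := by
    rw [hNB, ← Matrix.mul_assoc, Matrix.trace_mul_comm, ← Matrix.mul_assoc]
    exact trace_nonneg' psd2
  have trB : B.trace = ((m:ℝ)+3) * B 0 0 := by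
    rw [Matrix.trace]
    rw [Finset.sum_congr rfl (fun i _ => (Matrix.diag_apply B i).trans (hdiag i))]
    rw [Finset.sum_const, Finset.card_univ, Fintype.card_fin, nsmul_eq_mul]
    push_cast
    ring
  have hK : (0:ℝ) < (m:ℝ)+3 := by positivity
  have hB00 : B 0 0 ≤ (lam+1)/(lam*(lam+3)) := by
    have h1 := htr
    rw [Matrix.trace_sub, Matrix.trace_smul, smul_eq_mul, trN, trB] at h1
    have h2 : lam*(lam+3)^2 * B 0 0 * ((m:ℝ)+3) ≤ (lam+1)*(lam+3) * ((m:ℝ)+3) := by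
      nlinarith [h1]
    have h3 : lam*(lam+3)^2 * B 0 0 ≤ (lam+1)*(lam+3) := le_of_mul_le_mul_right h2 hK
    rw [le_div_iff₀ (by positivity : (0:ℝ) < lam*(lam+3))]
    nlinarith [h3, hlam]
  -- off-diagonal estimates
  have hABentry : ∀ p q : Fin (m+3),
      (lam+2) * B p q + B (p+1) q + B (p-1) q = if p = q then 1 else 0 := by
    intro p q
    have hexp : A * B = (lam+2) • B + (P m * B + (P m)ᵀ * B) := by
      rw [hA2]
      simp only [Matrix.add_mul, Matrix.smul_mul, Matrix.one_mul]
      abel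
    have h2 : ((lam+2) • B + (P m * B + (P m)ᵀ * B)) p q = (1 : Matrix _ _ ℝ) p q := by
      rw [← hexp, hAB]
    rw [Matrix.add_apply, Matrix.add_apply, Matrix.smul_apply, P_mul_apply, Pt_mul_apply,
      Matrix.one_apply, smul_eq_mul] at h2
    rw [← h2]
    ring
  have hBjj : ∀ q : Fin (m+3), 0 ≤ B q q := fun q => diag_nonneg hBpd.posSemidef q
  have main : ∀ q p : Fin (m+3), p ≠ q → |B p q| ≤ B q q / (lam+1) := by
    intro q
    have hne : (Finset.univ.erase q).Nonempty :=
      ⟨q+1, Finset.mem_erase.mpr ⟨(ne_add_one q).symm, Finset.mem_univ _⟩⟩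
    obtain ⟨i0, hi0mem, hi0max⟩ :=
      Finset.exists_max_image (Finset.univ.erase q) (fun p => |B p q|) hne
    have hi0ne : i0 ≠ q := (Finset.mem_erase.mp hi0mem).1
    have heq := hABentry i0 q
    rw [if_neg hi0ne] at heq
    have habs : (lam+2) * |B i0 q| ≤ |B (i0+1) q| + |B (i0-1) q| := by
      have h1 : (lam+2) * B i0 q = -(B (i0+1) q + B (i0-1) q) := by linarith
      calc (lam+2)*|B i0 q| = |(lam+2) * B i0 q| := by
            rw [abs_mul, abs_of_pos (by linarith : (0:ℝ) < lam+2)]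
      _ = |B (i0+1) q + B (i0-1) q| := by rw [h1, abs_neg]
      _ ≤ |B (i0+1) q| + |B (i0-1) q| := abs_add_le _ _
    have hneq2 : i0 + 1 ≠ i0 - 1 := by
      intro h
      have h5 := congrArg (fun x : Fin (m+3) => x + 1) h
      beta_reduce at h5
      rw [sub_add_cancel] at h5
      exact ne_add_two i0 h5.symm
    have hMle : (lam+1) * |B i0 q| ≤ B q q := by
      by_cases hu : i0 + 1 = q
      · have hv : i0 - 1 ≠ q := fun h => hneq2 (hu.trans h.symm)
        have h2 : |B (i0-1) q| ≤ |B i0 q| :=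
          hi0max _ (Finset.mem_erase.mpr ⟨hv, Finset.mem_univ _⟩)
        have h3 : |B (i0+1) q| = B q q := by rw [hu, abs_of_nonneg (hBjj q)]
        rw [h3] at habs
        linarith
      · by_cases hv : i0 - 1 = q
        · have h2 : |B (i0+1) q| ≤ |B i0 q| :=
            hi0max _ (Finset.mem_erase.mpr ⟨hu, Finset.mem_univ _⟩)
          have h3 : |B (i0-1) q| = B q q := by rw [hv, abs_of_nonneg (hBjj q)]
          rw [h3] at habs
          linarith
        · have h2 : |B (i0+1) q| ≤ |B i0 q| :=
            hi0max _ (Finset.mem_erase.mpr ⟨hu, Finset.mem_univ _⟩)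
          have h3 : |B (i0-1) q| ≤ |B i0 q| :=
            hi0max _ (Finset.mem_erase.mpr ⟨hv, Finset.mem_univ _⟩)
          have hlM : lam * |B i0 q| ≤ 0 := by linarith
          have hM0 : |B i0 q| ≤ 0 := by
            by_contra hcon
            push_neg at hcon
            nlinarith
          have h7 : (lam+1) * |B i0 q| ≤ 0 :=
            mul_nonpos_of_nonneg_of_nonpos (by linarith) hM0
          linarith [hBjj q]
    intro p hpq
    have h6 : |B p q| ≤ |B i0 q| :=
      hi0max p (Finset.mem_erase.mpr ⟨hpq, Finset.mem_univ _⟩)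
    rw [le_div_iff₀ (by linarith : (0:ℝ) < lam+1)]
    have h7 : |B p q| * (lam+1) ≤ |B i0 q| * (lam+1) :=
      mul_le_mul_of_nonneg_right h6 (by linarith)
    linarith
  constructor
  · intro i
    rw [hdiag i]
    exact hB00
  · intro i j hij
    have h := main j i (Ne.symm hij)
    rw [hdiag i, ← hdiag j]
    exact h
end
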